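/- Let Ψ : W({white,black}) → ℕ be the map forgetting colors (sending a word to its length) and let c(w) be the color sum (number of whites minus blacks). A word w over {white, black} of even length has an 'alternating coloring preimage' characterization: the map F sending a word w' over {line, triangle} (with even total length) to the word over {white, black} given by coloring positions alternately and deleting triangles is surjective onto all words over {white, black}, and any two preimages of the same word differ only by insertion/deletion of adjacent pairs of triangles and triangles at the end. In particular, every word over {white, black} has a unique shortest preimage under F. -/

import Mathlib

/-- The functor F on words over {|, △} (| = `true`, △ = `false`): color positions
alternately white (`true`), black (`false`), starting white, then delete all △'s. -/
def Fword (w : List Bool) : List Bool :=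
  (((List.range w.length).zip w).filter fun p => p.2).map fun p => p.1 % 2 == 0

/-- One-step moves preserving F: inserting two adjacent △'s, or appending a △. -/
def Fstep (w w' : List Bool) : Prop :=
  (∃ u v, w = u ++ v ∧ w' = u ++ [false, false] ++ v) ∨ w' = w ++ [false]

/-- Recursive version of `Fword`, carrying current parity (`true` = even). -/
def Fa (p : Bool) : List Bool → List Bool
  | [] => []
  | true :: w => p :: Fa (!p) w
  | false :: w => Fa (!p) w

/-- Canonical (reduced) preimage. -/
def canon' (p : Bool) : List Bool → List Bool
  | [] => []
  | c :: cs => if c = p then true :: canon' (!p) cs else false :: true :: canon' p cs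

lemma succ_parity (n : ℕ) : ((n+1) % 2 == 0) = !(n % 2 == 0) := by
  rcases Nat.mod_two_eq_zero_or_one n with h | h <;> simp [Nat.add_mod, h]

lemma Fword_enumFrom (w : List Bool) : ∀ n,
    (((List.range' n w.length).zip w).filter (fun p => p.2)).map (fun p => p.1 % 2 == 0)
      = Fa (n % 2 == 0) w := by
  induction w with
  | nil => intro n; rfl
  | cons a t ih =>
    intro n
    cases a <;> simp [List.range'_succ, Fa, ih (n+1), succ_parity]

lemma Fword_eq (w : List Bool) : Fword w = Fa true w := by
  have := Fword_enumFrom w 0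
  simpa [Fword, List.range_eq_range'] using this

lemma Fa_insert (u : List Bool) : ∀ p v, Fa p (u ++ false :: false :: v) = Fa p (u ++ v) := by
  induction u with
  | nil => intro p v; simp [Fa]
  | cons a t ih => intro p v; cases a <;> simp [Fa, ih]

lemma Fa_snoc (w : List Bool) : ∀ p, Fa p (w ++ [false]) = Fa p w := by
  induction w with
  | nil => intro p; rfl
  | cons a t ih => intro p; cases a <;> simp [Fa, ih]

lemma Fstep_Fword {w w' : List Bool} (h : Fstep w w') : Fword w = Fword w' := by
  rw [Fword_eq, Fword_eq]
  rcases h with ⟨u, v, rfl, rfl⟩ | rfl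
  · simp [Fa_insert]
  · simp [Fa_snoc]

lemma Fstep_cons {w w' : List Bool} (a : Bool) (h : Fstep w w') : Fstep (a :: w) (a :: w') := by
  rcases h with ⟨u, v, rfl, rfl⟩ | rfl
  · exact Or.inl ⟨a :: u, v, by simp, by simp⟩
  · exact Or.inr (by simp)

lemma EqvGen_cons {w w' : List Bool} (a : Bool) (h : Relation.EqvGen Fstep w w') :
    Relation.EqvGen Fstep (a :: w) (a :: w') := by
  induction h with
  | rel x y hxy => exact .rel _ _ (Fstep_cons a hxy)
  | refl x => exact .refl _
  | symm x y _ ih => exact .symm _ _ ih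
  | trans x y z _ _ ih1 ih2 => exact .trans _ _ _ ih1 ih2

lemma Fa_canon' : ∀ (cw : List Bool) (p : Bool), Fa p (canon' p cw) = cw := by
  intro cw
  induction cw with
  | nil => intro p; rfl
  | cons c cs ih =>
    intro p
    by_cases h : c = p
    · simp [canon', h, Fa, ih]
    · have hc : c = !p := by cases c <;> cases p <;> simp_all
      simp [canon', h, Fa, Bool.not_not, ih, hc]

theorem reach : ∀ (w : List Bool) (p : Bool),
    Relation.EqvGen Fstep (canon' p (Fa p w)) w
  | [], _ => .refl []
  | true :: t, p => by
    have ih := reach t (!p)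
    simp only [Fa, canon', if_pos rfl]
    exact EqvGen_cons true ih
  | [false], p => by
    have : Fstep [] [false] := Or.inr rfl
    simpa [Fa, canon'] using Relation.EqvGen.rel _ _ this
  | false :: false :: t, p => by
    have ih := reach t p
    have h1 : Fstep t (false :: false :: t) := Or.inl ⟨[], t, rfl, rfl⟩
    have : Fa p (false :: false :: t) = Fa p t := by simp [Fa, Bool.not_not]
    rw [this]
    exact .trans _ _ _ ih (.rel _ _ h1)
  | false :: true :: t, p => by
    have ih := reach t p
    have hne : (!p) ≠ p := by cases p <;> simp
    simp only [Fa, Bool.not_not, canon', if_neg hne]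
    exact EqvGen_cons false (EqvGen_cons true ih)

lemma canon'_len : ∀ (w : List Bool) (p : Bool),
    (canon' p (Fa p w)).length ≤ w.length ∧
      ((canon' p (Fa p w)).length = w.length → canon' p (Fa p w) = w)
  | [], _ => ⟨le_refl _, fun _ => rfl⟩
  | true :: t, p => by
    have ih := canon'_len t (!p)
    have e : canon' p (Fa p (true :: t)) = true :: canon' (!p) (Fa (!p) t) := by
      simp [Fa, canon']
    rw [e]
    simp only [List.length_cons]
    exact ⟨by omega, fun h => by rw [ih.2 (by omega)]⟩
  | [false], p => by
    simp [Fa, canon']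
  | false :: false :: t, p => by
    have ih := canon'_len t p
    have : Fa p (false :: false :: t) = Fa p t := by simp [Fa, Bool.not_not]
    rw [this]
    simp only [List.length_cons]
    exact ⟨by omega, fun h => by omega⟩
  | false :: true :: t, p => by
    have ih := canon'_len t p
    have hne : (!p) ≠ p := by cases p <;> simp
    simp only [Fa, Bool.not_not, canon', if_neg hne, List.length_cons]
    exact ⟨by omega, fun h => by rw [ih.2 (by omega)]⟩

/-- F is surjective onto words over {white, black}; two words have the same image
under F iff they are related by the equivalence generated by inserting/deleting
two adjacent △'s and appending/removing △'s at the end; consequently every word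
over {white, black} has a unique shortest preimage under F. -/
theorem stmt17 :
    Function.Surjective Fword ∧
    (∀ w₁ w₂, Fword w₁ = Fword w₂ ↔ Relation.EqvGen Fstep w₁ w₂) ∧
    ∀ cw : List Bool, ∃! w : List Bool,
      Fword w = cw ∧ ∀ w', Fword w' = cw → w.length ≤ w'.length := by
  have hFc : ∀ cw, Fword (canon' true cw) = cw := fun cw => by
    rw [Fword_eq]; exact Fa_canon' cw true
  have hmin : ∀ cw w', Fword w' = cw → (canon' true cw).length ≤ w'.length := by
    intro cw w' h
    have := (canon'_len w' true).1
    rwa [← Fword_eq, h] at this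
  refine ⟨fun cw => ⟨canon' true cw, hFc cw⟩, ?_, ?_⟩
  · intro w₁ w₂
    constructor
    · intro h
      have h1 := reach w₁ true
      have h2 := reach w₂ true
      rw [← Fword_eq] at h1 h2
      rw [h] at h1
      exact .trans _ _ _ (.symm _ _ h1) h2
    · intro h
      induction h with
      | rel x y hxy => exact Fstep_Fword hxy
      | refl x => rfl
      | symm x y _ ih => exact ih.symm
      | trans x y z _ _ ih1 ih2 => exact ih1.trans ih2
  · intro cw
    refine ⟨canon' true cw, ⟨hFc cw, hmin cw⟩, ?_⟩
    rintro w ⟨hF, hm⟩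
    have h1 : (canon' true cw).length ≤ w.length := hmin cw w hF
    have h2 : w.length ≤ (canon' true cw).length := hm _ (hFc cw)
    have heq := (canon'_len w true).2 (by
      have := hmin cw w hF
      rw [← Fword_eq, hF]; omega)
    rw [← Fword_eq, hF] at heq
    exact heq.symm
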